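/- Suppose the margin condition P{0 < |m(X) − 1/2| ≤ t} ≤ c·t^α holds for all t > 0 with constants c, α > 0, where m(x) = P(Y=1|X=x). Then for the plug-in classifier ĝ based on an estimator m̂, P{ĝ(X) ≠ Y} − P{g_B(X) ≠ Y} ≤ C·(E|m̂(X) − m(X)|²)^{(1+α)/(2+α)} for a constant C depending only on c and α. -/

import Mathlib

open MeasureTheory Real

/-- Auxiliary pointwise inequality for the peeling argument. -/
lemma plugin_aux {t d e ind : ℝ} (ht : 0 < t) (hd : 0 ≤ d) (he : d ≤ e)
    (hind : 0 ≤ ind) (hmem : 0 < d → d ≤ t → ind = 1) :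
    2 * d ≤ 2 * t * ind + (2 / t) * e ^ 2 := by
  have hnn : 0 ≤ 2 * t * ind := by positivity
  have hnn2 : 0 ≤ (2 / t) * e ^ 2 := by positivity
  rcases eq_or_lt_of_le hd with h0 | h0
  · nlinarith
  rcases le_or_gt d t with hle | hlt
  · rw [hmem h0 hle]
    nlinarith
  · have he' : t < e := lt_of_lt_of_le hlt he
    have h2 : 2 * d ≤ (2 / t) * e ^ 2 := by
      rw [div_mul_eq_mul_div, le_div_iff₀ ht]
      nlinarith
    nlinarith

/-- Audibert–Tsybakov, Lemma 5.2: under the margin condition with exponent `α`,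
the plug-in classifier satisfies
`P{ĝ(X) ≠ Y} − P{g_B(X) ≠ Y} ≤ C·(E|m̂(X) − m(X)|²)^{(1+α)/(2+α)}`. -/
theorem margin_condition_plugin_bound
    {Ω α : Type*} [MeasurableSpace Ω] [MeasurableSpace α]
    (c a : ℝ) (hc : 0 < c) (ha : 0 < a) :
    ∃ C > 0, ∀ (P : Measure Ω), IsProbabilityMeasure P →
      ∀ (X : Ω → α) (Y : Ω → ℝ) (m mhat : α → ℝ),
      Measurable X → Measurable Y → Measurable m → Measurable mhat →
      (∀ ω, Y ω = 0 ∨ Y ω = 1) →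
      ((fun ω => m (X ω)) =ᵐ[P] P[Y | MeasurableSpace.comap X inferInstance]) →
      (∀ t : ℝ, 0 < t →
        (P {ω | 0 < |m (X ω) - 1 / 2| ∧ |m (X ω) - 1 / 2| ≤ t}).toReal ≤ c * t ^ a) →
      Integrable (fun ω => (mhat (X ω) - m (X ω)) ^ 2) P →
      (P {ω | (if 1 / 2 < mhat (X ω) then (1 : ℝ) else 0) ≠ Y ω}).toReal
        - (P {ω | (if 1 / 2 < m (X ω) then (1 : ℝ) else 0) ≠ Y ω}).toReal
        ≤ C * (∫ ω, (mhat (X ω) - m (X ω)) ^ 2 ∂P) ^ ((1 + a) / (2 + a)) := by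
  classical
  refine ⟨2 * c + 2, by positivity, ?_⟩
  intro P hP X Y m mhat hX hY hm hmhat hY01 hce hmargin hint
  haveI := hP
  have hle := hX.comap_le
  have hYb : ∀ ω, |Y ω| ≤ 1 := by intro ω; rcases hY01 ω with h | h <;> simp [h]
  have bdd_int : ∀ (f : Ω → ℝ) (C : ℝ), Measurable f → (∀ ω, |f ω| ≤ C) → Integrable f P := by
    intro f C hf hb
    refine (integrable_const (μ := P) C).mono' hf.aestronglyMeasurable ?_
    exact Filter.Eventually.of_forall (by simpa [Real.norm_eq_abs] using hb)
  have hYint : Integrable Y P := bdd_int Y 1 hY hYb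
  have hmXint : Integrable (fun ω => m (X ω)) P := integrable_condExp.congr hce.symm
  -- risk formula for a plug-in classifier based on q
  have key : ∀ q : α → ℝ, Measurable q →
      (P {ω | (if 1 / 2 < q (X ω) then (1 : ℝ) else 0) ≠ Y ω}).toReal
        = (∫ ω, (if 1 / 2 < q (X ω) then (1 : ℝ) else 0) ∂P) + (∫ ω, Y ω ∂P)
          - 2 * ∫ ω, (if 1 / 2 < q (X ω) then (1 : ℝ) else 0) * m (X ω) ∂P := by
    intro q hq
    have hSmeas : MeasurableSet {ω | 1 / 2 < q (X ω)} :=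
      measurableSet_lt measurable_const (hq.comp hX)
    have hgmeas : Measurable (fun ω => if 1 / 2 < q (X ω) then (1 : ℝ) else 0) :=
      Measurable.ite hSmeas measurable_const measurable_const
    have hgb : ∀ ω, |if 1 / 2 < q (X ω) then (1 : ℝ) else 0| ≤ 1 := by
      intro ω; by_cases h : 1 / 2 < q (X ω)
      · rw [if_pos h]; norm_num
      · rw [if_neg h]; norm_num
    have hgint : Integrable (fun ω => if 1 / 2 < q (X ω) then (1 : ℝ) else 0) P :=
      bdd_int _ 1 hgmeas hgb
    have hgYint : Integrable (fun ω => (if 1 / 2 < q (X ω) then (1 : ℝ) else 0) * Y ω) P :=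
      bdd_int _ 1 (hgmeas.mul hY) (fun ω => by
        rw [abs_mul]
        calc |if 1 / 2 < q (X ω) then (1 : ℝ) else 0| * |Y ω| ≤ 1 * 1 :=
          mul_le_mul (hgb ω) (hYb ω) (abs_nonneg _) zero_le_one
        _ = 1 := one_mul 1)
    have hne : MeasurableSet {ω | (if 1 / 2 < q (X ω) then (1 : ℝ) else 0) ≠ Y ω} :=
      (measurableSet_eq_fun hgmeas hY).compl
    have step1 : (P {ω | (if 1 / 2 < q (X ω) then (1 : ℝ) else 0) ≠ Y ω}).toReal
        = ∫ ω, ((if 1 / 2 < q (X ω) then (1 : ℝ) else 0) + Y ω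
            - 2 * ((if 1 / 2 < q (X ω) then (1 : ℝ) else 0) * Y ω)) ∂P := by
      rw [← measureReal_def, ← integral_indicator_one hne]
      refine integral_congr_ae (Filter.Eventually.of_forall fun ω => ?_)
      rcases hY01 ω with h | h <;> by_cases h2 : 1 / 2 < q (X ω)
      · have hmem : ω ∈ {ω | (if 1 / 2 < q (X ω) then (1 : ℝ) else 0) ≠ Y ω} := by
          simp only [Set.mem_setOf_eq, if_pos h2, h]; norm_num
        rw [Set.indicator_of_mem hmem]; simp only [Pi.one_apply, if_pos h2, h]; norm_num
      · have hmem : ω ∉ {ω | (if 1 / 2 < q (X ω) then (1 : ℝ) else 0) ≠ Y ω} := by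
          simp only [Set.mem_setOf_eq, if_neg h2, h]; norm_num
        rw [Set.indicator_of_notMem hmem]; simp only [Pi.one_apply, if_neg h2, h]; norm_num
      · have hmem : ω ∉ {ω | (if 1 / 2 < q (X ω) then (1 : ℝ) else 0) ≠ Y ω} := by
          simp only [Set.mem_setOf_eq, if_pos h2, h]; norm_num
        rw [Set.indicator_of_notMem hmem]; simp only [Pi.one_apply, if_pos h2, h]; norm_num
      · have hmem : ω ∈ {ω | (if 1 / 2 < q (X ω) then (1 : ℝ) else 0) ≠ Y ω} := by
          simp only [Set.mem_setOf_eq, if_neg h2, h]; norm_num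
        rw [Set.indicator_of_mem hmem]; simp only [Pi.one_apply, if_neg h2, h]; norm_num
    have step2 : (∫ ω, (if 1 / 2 < q (X ω) then (1 : ℝ) else 0) * Y ω ∂P)
        = ∫ ω, (if 1 / 2 < q (X ω) then (1 : ℝ) else 0) * m (X ω) ∂P := by
      have hSmX : MeasurableSet[MeasurableSpace.comap X inferInstance] {ω | 1 / 2 < q (X ω)} :=
        ⟨{x | 1 / 2 < q x}, measurableSet_lt measurable_const hq, rfl⟩
      have e1 : ∀ (Z : Ω → ℝ),
          (fun ω => (if 1 / 2 < q (X ω) then (1 : ℝ) else 0) * Z ω)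
            = Set.indicator {ω | 1 / 2 < q (X ω)} Z := by
        intro Z; funext ω
        by_cases h2 : 1 / 2 < q (X ω)
        · rw [Set.indicator_of_mem (by exact h2), if_pos h2, one_mul]
        · rw [Set.indicator_of_notMem (by exact h2), if_neg h2, zero_mul]
      calc (∫ ω, (if 1 / 2 < q (X ω) then (1 : ℝ) else 0) * Y ω ∂P)
          = ∫ ω, Set.indicator {ω | 1 / 2 < q (X ω)} Y ω ∂P := by rw [e1 Y]
        _ = ∫ ω in {ω | 1 / 2 < q (X ω)}, Y ω ∂P := integral_indicator hSmeas
        _ = ∫ ω in {ω | 1 / 2 < q (X ω)}, (P[Y|MeasurableSpace.comap X inferInstance]) ω ∂P :=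
            (setIntegral_condExp hle hYint hSmX).symm
        _ = ∫ ω in {ω | 1 / 2 < q (X ω)}, m (X ω) ∂P := by
            refine setIntegral_congr_ae hSmeas ?_
            filter_upwards [hce] with ω h _ using h.symm
        _ = ∫ ω, Set.indicator {ω | 1 / 2 < q (X ω)} (fun ω => m (X ω)) ω ∂P :=
            (integral_indicator hSmeas).symm
        _ = ∫ ω, (if 1 / 2 < q (X ω) then (1 : ℝ) else 0) * m (X ω) ∂P := by
            rw [← e1 (fun ω => m (X ω))]
    have hsub := integral_sub (μ := P)
      (f := fun ω => (if 1 / 2 < q (X ω) then (1 : ℝ) else 0) + Y ω)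
      (g := fun ω => 2 * ((if 1 / 2 < q (X ω) then (1 : ℝ) else 0) * Y ω))
      (hgint.add hYint) (hgYint.const_mul 2)
    have hadd := integral_add (μ := P)
      (f := fun ω => (if 1 / 2 < q (X ω) then (1 : ℝ) else 0)) (g := Y) hgint hYint
    rw [step1, hsub, hadd, integral_const_mul, step2]
  have eqhat := key mhat hmhat
  have eqB := key m hm
  have hS1 : MeasurableSet {ω | 1 / 2 < mhat (X ω)} :=
    measurableSet_lt measurable_const (hmhat.comp hX)
  have hS2 : MeasurableSet {ω | 1 / 2 < m (X ω)} :=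
    measurableSet_lt measurable_const (hm.comp hX)
  have hg1meas : Measurable (fun ω => if 1 / 2 < mhat (X ω) then (1 : ℝ) else 0) :=
    Measurable.ite hS1 measurable_const measurable_const
  have hg2meas : Measurable (fun ω => if 1 / 2 < m (X ω) then (1 : ℝ) else 0) :=
    Measurable.ite hS2 measurable_const measurable_const
  have hg1b : ∀ ω, |if 1 / 2 < mhat (X ω) then (1 : ℝ) else 0| ≤ 1 := by
    intro ω; by_cases h : 1 / 2 < mhat (X ω)
    · rw [if_pos h]; norm_num
    · rw [if_neg h]; norm_num
  have hg2b : ∀ ω, |if 1 / 2 < m (X ω) then (1 : ℝ) else 0| ≤ 1 := by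
    intro ω; by_cases h : 1 / 2 < m (X ω)
    · rw [if_pos h]; norm_num
    · rw [if_neg h]; norm_num
  have hg1int := bdd_int _ 1 hg1meas hg1b
  have hg2int := bdd_int _ 1 hg2meas hg2b
  have hg1m : Integrable (fun ω => (if 1 / 2 < mhat (X ω) then (1 : ℝ) else 0) * m (X ω)) P :=
    hmXint.bdd_mul (c := 1) hg1meas.aestronglyMeasurable
      (Filter.Eventually.of_forall fun ω => by simpa [Real.norm_eq_abs] using hg1b ω)
  have hg2m : Integrable (fun ω => (if 1 / 2 < m (X ω) then (1 : ℝ) else 0) * m (X ω)) P :=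
    hmXint.bdd_mul (c := 1) hg2meas.aestronglyMeasurable
      (Filter.Eventually.of_forall fun ω => by simpa [Real.norm_eq_abs] using hg2b ω)
  set F : Ω → ℝ := fun ω => ((if 1 / 2 < mhat (X ω) then (1 : ℝ) else 0)
      - (if 1 / 2 < m (X ω) then (1 : ℝ) else 0)) * (1 - 2 * m (X ω)) with hF
  have hFint : Integrable F P := by
    have h1m : Integrable (fun ω => 1 - 2 * m (X ω)) P :=
      (integrable_const 1).sub (hmXint.const_mul 2)
    refine h1m.bdd_mul (c := 2) (hg1meas.sub hg2meas).aestronglyMeasurable (Filter.Eventually.of_forall fun ω => ?_)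
    rw [Real.norm_eq_abs]
    by_cases h1 : 1 / 2 < mhat (X ω) <;> by_cases h2 : 1 / 2 < m (X ω)
    · rw [if_pos h1, if_pos h2]; norm_num
    · rw [if_pos h1, if_neg h2]; norm_num
    · rw [if_neg h1, if_pos h2]; norm_num
    · rw [if_neg h1, if_neg h2]; norm_num
  have hA : Integrable (fun ω => (if 1 / 2 < mhat (X ω) then (1 : ℝ) else 0)
      - 2 * ((if 1 / 2 < mhat (X ω) then (1 : ℝ) else 0) * m (X ω))) P :=
    hg1int.sub (hg1m.const_mul 2)
  have hB2 : Integrable (fun ω => (if 1 / 2 < m (X ω) then (1 : ℝ) else 0)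
      - 2 * ((if 1 / 2 < m (X ω) then (1 : ℝ) else 0) * m (X ω))) P :=
    hg2int.sub (hg2m.const_mul 2)
  have hpsi_eq : ∫ ω, F ω ∂P
      = ((∫ ω, (if 1 / 2 < mhat (X ω) then (1 : ℝ) else 0) ∂P)
          - 2 * ∫ ω, (if 1 / 2 < mhat (X ω) then (1 : ℝ) else 0) * m (X ω) ∂P)
        - ((∫ ω, (if 1 / 2 < m (X ω) then (1 : ℝ) else 0) ∂P)
          - 2 * ∫ ω, (if 1 / 2 < m (X ω) then (1 : ℝ) else 0) * m (X ω) ∂P) := by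
    have hFeq : F = fun ω => ((if 1 / 2 < mhat (X ω) then (1 : ℝ) else 0)
        - 2 * ((if 1 / 2 < mhat (X ω) then (1 : ℝ) else 0) * m (X ω)))
      - ((if 1 / 2 < m (X ω) then (1 : ℝ) else 0)
        - 2 * ((if 1 / 2 < m (X ω) then (1 : ℝ) else 0) * m (X ω))) := by
      funext ω; rw [hF]; ring
    have hsub1 := integral_sub (μ := P)
      (f := fun ω => (if 1 / 2 < mhat (X ω) then (1 : ℝ) else 0)
        - 2 * ((if 1 / 2 < mhat (X ω) then (1 : ℝ) else 0) * m (X ω)))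
      (g := fun ω => (if 1 / 2 < m (X ω) then (1 : ℝ) else 0)
        - 2 * ((if 1 / 2 < m (X ω) then (1 : ℝ) else 0) * m (X ω))) hA hB2
    have hsub2 := integral_sub (μ := P)
      (f := fun ω => (if 1 / 2 < mhat (X ω) then (1 : ℝ) else 0))
      (g := fun ω => 2 * ((if 1 / 2 < mhat (X ω) then (1 : ℝ) else 0) * m (X ω)))
      hg1int (hg1m.const_mul 2)
    have hsub3 := integral_sub (μ := P)
      (f := fun ω => (if 1 / 2 < m (X ω) then (1 : ℝ) else 0))
      (g := fun ω => 2 * ((if 1 / 2 < m (X ω) then (1 : ℝ) else 0) * m (X ω)))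
      hg2int (hg2m.const_mul 2)
    rw [hFeq, hsub1, hsub2, hsub3, integral_const_mul, integral_const_mul]
  set D := ∫ ω, (mhat (X ω) - m (X ω)) ^ 2 ∂P with hD
  have hDnn : 0 ≤ D := by rw [hD]; exact integral_nonneg fun ω => sq_nonneg _
  have hexp_pos : 0 < (1 + a) / (2 + a) := div_pos (by linarith) (by linarith)
  have main : ∫ ω, F ω ∂P ≤ (2 * c + 2) * D ^ ((1 + a) / (2 + a)) := by
    rcases eq_or_lt_of_le hDnn with hD0 | hDpos
    · have hzero : (fun ω => (mhat (X ω) - m (X ω)) ^ 2) =ᵐ[P] 0 :=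
        (integral_eq_zero_iff_of_nonneg (fun ω => sq_nonneg _) hint).mp
          (by rw [← hD]; exact hD0.symm)
      have hF0 : ∫ ω, F ω ∂P = 0 := by
        refine integral_eq_zero_of_ae ?_
        filter_upwards [hzero] with ω h
        have hsq : (mhat (X ω) - m (X ω)) ^ 2 = 0 := h
        have heq : mhat (X ω) = m (X ω) := by nlinarith
        rw [hF]
        show ((if 1 / 2 < mhat (X ω) then (1 : ℝ) else 0)
          - (if 1 / 2 < m (X ω) then (1 : ℝ) else 0)) * (1 - 2 * m (X ω)) = 0
        rw [heq, sub_self, zero_mul]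
      rw [hF0, ← hD0, Real.zero_rpow (ne_of_gt hexp_pos), mul_zero]
    · set t : ℝ := D ^ ((1 : ℝ) / (2 + a)) with htdef
      have htpos : 0 < t := Real.rpow_pos_of_pos hDpos _
      set St := {ω | 0 < |m (X ω) - 1 / 2| ∧ |m (X ω) - 1 / 2| ≤ t} with hStdef
      have habs : Measurable fun ω => |m (X ω) - 1 / 2| :=
        ((hm.comp hX).sub measurable_const).abs
      have hStmeas : MeasurableSet St :=
        (measurableSet_lt measurable_const habs).inter (measurableSet_le habs measurable_const)
      have hBint1 : Integrable (St.indicator (1 : Ω → ℝ)) P :=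
        (integrable_const 1).indicator hStmeas
      have hpoint : ∀ ω, F ω ≤ 2 * t * St.indicator 1 ω
          + (2 / t) * (mhat (X ω) - m (X ω)) ^ 2 := by
        intro ω
        have hind : 0 ≤ St.indicator (1 : Ω → ℝ) ω :=
          Set.indicator_nonneg (fun _ _ => zero_le_one) ω
        have hFω : F ω = ((if 1 / 2 < mhat (X ω) then (1 : ℝ) else 0)
            - (if 1 / 2 < m (X ω) then (1 : ℝ) else 0)) * (1 - 2 * m (X ω)) := by rw [hF]
        by_cases h1 : 1 / 2 < mhat (X ω) <;> by_cases h2 : 1 / 2 < m (X ω)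
        · rw [hFω, if_pos h1, if_pos h2, sub_self, zero_mul]
          exact add_nonneg (mul_nonneg (by positivity) hind)
            (mul_nonneg (by positivity) (sq_nonneg _))
        · have hv : m (X ω) ≤ 1 / 2 := le_of_not_gt h2
          have hd : |m (X ω) - 1 / 2| = 1 / 2 - m (X ω) := by
            rw [abs_of_nonpos (by linarith)]; ring
          have he : |m (X ω) - 1 / 2| ≤ |mhat (X ω) - m (X ω)| := by
            rw [hd]; refine le_trans ?_ (le_abs_self _); linarith
          have hkey := plugin_aux htpos (abs_nonneg _) he hind
            (fun hp hl => Set.indicator_of_mem (show ω ∈ St from ⟨hp, hl⟩) (1 : Ω → ℝ))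
          rw [sq_abs, hd] at hkey
          rw [hFω, if_pos h1, if_neg h2]
          linarith
        · have hu : mhat (X ω) ≤ 1 / 2 := le_of_not_gt h1
          have hd : |m (X ω) - 1 / 2| = m (X ω) - 1 / 2 := abs_of_nonneg (by linarith)
          have he : |m (X ω) - 1 / 2| ≤ |mhat (X ω) - m (X ω)| := by
            rw [hd, abs_sub_comm]; refine le_trans ?_ (le_abs_self _); linarith
          have hkey := plugin_aux htpos (abs_nonneg _) he hind
            (fun hp hl => Set.indicator_of_mem (show ω ∈ St from ⟨hp, hl⟩) (1 : Ω → ℝ))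
          rw [sq_abs, hd] at hkey
          rw [hFω, if_neg h1, if_pos h2]
          linarith
        · rw [hFω, if_neg h1, if_neg h2, sub_self, zero_mul]
          exact add_nonneg (mul_nonneg (by positivity) hind)
            (mul_nonneg (by positivity) (sq_nonneg _))
      have hBint : Integrable (fun ω => 2 * t * St.indicator 1 ω
          + (2 / t) * (mhat (X ω) - m (X ω)) ^ 2) P :=
        (hBint1.const_mul (2 * t)).add (hint.const_mul (2 / t))
      have hmono := integral_mono hFint hBint hpoint
      have hBval : ∫ ω, (2 * t * St.indicator 1 ω + (2 / t) * (mhat (X ω) - m (X ω)) ^ 2) ∂P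
          = 2 * t * (P St).toReal + (2 / t) * D := by
        rw [integral_add (hBint1.const_mul (2 * t)) (hint.const_mul (2 / t)),
          integral_const_mul, integral_const_mul, integral_indicator_one hStmeas, ← hD, measureReal_def]
      have hmarg := hmargin t htpos
      rw [← hStdef] at hmarg
      have hfinal : 2 * t * (P St).toReal + (2 / t) * D ≤ 2 * t * (c * t ^ a) + (2 / t) * D := by
        have := mul_le_mul_of_nonneg_left hmarg (by positivity : (0 : ℝ) ≤ 2 * t)
        linarith
      have h2a : (0 : ℝ) < 2 + a := by linarith
      have h2a' : (2 : ℝ) + a ≠ 0 := ne_of_gt h2a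
      have e1 : t * t ^ a = D ^ ((1 + a) / (2 + a)) := by
        have ht1 : t * t ^ a = t ^ ((1 : ℝ) + a) := by
          rw [Real.rpow_add htpos, Real.rpow_one]
        rw [ht1, htdef, ← Real.rpow_mul hDnn]
        congr 1
        ring
      have e2 : D / t = D ^ ((1 + a) / (2 + a)) := by
        have hds : D ^ ((1 : ℝ) - 1 / (2 + a)) = D ^ (1 : ℝ) / D ^ ((1 : ℝ) / (2 + a)) :=
          Real.rpow_sub hDpos _ _
        rw [Real.rpow_one] at hds
        rw [htdef, ← hds]
        congr 1
        field_simp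
        ring
      have halg : 2 * t * (c * t ^ a) + (2 / t) * D
          = (2 * c + 2) * D ^ ((1 + a) / (2 + a)) := by
        have hrw : 2 * t * (c * t ^ a) + (2 / t) * D = 2 * c * (t * t ^ a) + 2 * (D / t) := by
          ring
        rw [hrw, e1, e2]; ring
      rw [hBval] at hmono
      linarith
  rw [eqhat, eqB]
  linarith [hpsi_eq, main]
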